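/- For fixed r₁ ≥ 0 and r₂ ≥ 0 with r₁ + 1 > 0, the function L(c) = (1+r₁)/c − r₁c/(1+r₂(1−c))² is strictly decreasing on the interval (0,1]. -/
import Mathlib

/-- Monotonicity claim from Appendix B of the paper (proof of Corollary 1): the
quasi-degradation function `L(c)` is strictly decreasing on `(0, 1]`. -/
theorem stmt_7 (r₁ r₂ : ℝ) (hr₁ : 0 ≤ r₁) (hr₂ : 0 ≤ r₂) (h : 0 < r₁ + 1) :
    StrictAntiOn (fun c : ℝ => (1 + r₁) / c - r₁ * c / (1 + r₂ * (1 - c)) ^ 2)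
      (Set.Ioc 0 1) := by
  intro x hx y hy hxy
  obtain ⟨hx0, hx1⟩ := hx
  obtain ⟨hy0, hy1⟩ := hy
  have hDx : (1:ℝ) ≤ 1 + r₂ * (1 - x) := by nlinarith
  have hDy : (1:ℝ) ≤ 1 + r₂ * (1 - y) := by nlinarith
  have hDyx : 1 + r₂ * (1 - y) ≤ 1 + r₂ * (1 - x) := by nlinarith
  have h1 : (1 + r₁) / y < (1 + r₁) / x :=
    div_lt_div_of_pos_left (by linarith) hx0 hxy
  have h2 : r₁ * x / (1 + r₂ * (1 - x)) ^ 2 ≤ r₁ * y / (1 + r₂ * (1 - y)) ^ 2 := by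
    apply div_le_div₀ (by positivity) (by nlinarith) (by positivity)
    nlinarith
  simp only
  linarith
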